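/- arXiv:1001.2835 — 2 statements merged into one kernel-verified Lean document; each statement's English description precedes it below -/
import Mathlib

section
/- For all nonnegative integers n and all positive real x, ∑_{k=0}^n C(n,k) (-1)^k / (k+x)^3 = (n! Γ(x)/Γ(n+1+x)) · (1/2)·((∑_{j=0}^n 1/(j+x))^2 + ∑_{j=0}^n 1/(j+x)^2). -/
open Finset

lemma gamma_prod (m : ℕ) (x : ℝ) (hx : 0 < x) :
    Real.Gamma ((m : ℝ) + x) = (∏ j ∈ range m, ((j : ℝ) + x)) * Real.Gamma x := by
  induction m with
  | zero => simp
  | succ m ih =>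
    have h1 : ((m + 1 : ℕ) : ℝ) + x = ((m : ℝ) + x) + 1 := by push_cast; ring
    have h2 : (m : ℝ) + x ≠ 0 := by positivity
    rw [h1, Real.Gamma_add_one h2, ih, prod_range_succ]
    ring

lemma coppo_aux (n : ℕ) : ∀ x : ℝ, 0 < x →
    ∑ k ∈ range (n + 1), (n.choose k : ℝ) * (-1) ^ k / ((k : ℝ) + x) ^ 3 =
      (n.factorial : ℝ) / (∏ j ∈ range (n + 1), ((j : ℝ) + x)) * (1 / 2) *
        ((∑ j ∈ range (n + 1), 1 / ((j : ℝ) + x)) ^ 2 +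
          ∑ j ∈ range (n + 1), 1 / ((j : ℝ) + x) ^ 2) := by
  induction n with
  | zero =>
    intro x hx
    have hx0 : x ≠ 0 := ne_of_gt hx
    simp only [range_one, sum_singleton, prod_singleton, Nat.choose_self, Nat.factorial_zero,
      Nat.cast_zero, Nat.cast_one, pow_zero, zero_add]
    field_simp
    ring
  | succ n ih =>
    intro x hx
    have hx1 : (0:ℝ) < x + 1 := by linarith
    have hx0 : x ≠ 0 := ne_of_gt hx
    -- sum recursion: S(n+1,x) = S(n,x) - S(n,x+1)
    have e1 : ∑ k ∈ range (n + 2), (((n+1).choose k : ℕ) : ℝ) * (-1) ^ k / ((k : ℝ) + x) ^ 3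
        = (∑ k ∈ range (n + 1), (((n+1).choose (k+1) : ℕ) : ℝ) * (-1) ^ (k+1) / (((k:ℝ)+1) + x) ^ 3)
          + 1 / x ^ 3 := by
      rw [Finset.sum_range_succ' (fun k => (((n+1).choose k : ℕ) : ℝ) * (-1) ^ k / ((k : ℝ) + x) ^ 3) (n+1)]
      push_cast
      norm_num
    have e2 : ∑ k ∈ range (n + 2), ((n.choose k : ℕ) : ℝ) * (-1) ^ k / ((k : ℝ) + x) ^ 3
        = (∑ k ∈ range (n + 1), ((n.choose (k+1) : ℕ) : ℝ) * (-1) ^ (k+1) / (((k:ℝ)+1) + x) ^ 3)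
          + 1 / x ^ 3 := by
      rw [Finset.sum_range_succ' (fun k => ((n.choose k : ℕ) : ℝ) * (-1) ^ k / ((k : ℝ) + x) ^ 3) (n+1)]
      push_cast
      norm_num
    have e3 : ∑ k ∈ range (n + 2), ((n.choose k : ℕ) : ℝ) * (-1) ^ k / ((k : ℝ) + x) ^ 3
        = ∑ k ∈ range (n + 1), ((n.choose k : ℕ) : ℝ) * (-1) ^ k / ((k : ℝ) + x) ^ 3 := by
      rw [show n + 2 = (n+1)+1 from rfl, Finset.sum_range_succ]
      simp [Nat.choose_succ_self]
    have hrec : ∑ k ∈ range (n + 2), (((n+1).choose k : ℕ) : ℝ) * (-1) ^ k / ((k : ℝ) + x) ^ 3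
        = (∑ k ∈ range (n + 1), ((n.choose k : ℕ) : ℝ) * (-1) ^ k / ((k : ℝ) + x) ^ 3)
          - ∑ k ∈ range (n + 1), ((n.choose k : ℕ) : ℝ) * (-1) ^ k / ((k : ℝ) + (x+1)) ^ 3 := by
      rw [e1]
      have split : ∀ k ∈ range (n+1),
          (((n+1).choose (k+1) : ℕ) : ℝ) * (-1) ^ (k+1) / (((k:ℝ)+1) + x) ^ 3
          = ((n.choose k : ℕ) : ℝ) * (-1) ^ (k+1) / (((k:ℝ)+1) + x) ^ 3
            + ((n.choose (k+1) : ℕ) : ℝ) * (-1) ^ (k+1) / (((k:ℝ)+1) + x) ^ 3 := by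
        intro k _
        rw [Nat.choose_succ_succ]
        push_cast
        ring
      rw [Finset.sum_congr rfl split, Finset.sum_add_distrib]
      have t1 : ∑ k ∈ range (n+1), ((n.choose k : ℕ) : ℝ) * (-1) ^ (k+1) / (((k:ℝ)+1) + x) ^ 3
          = - ∑ k ∈ range (n + 1), ((n.choose k : ℕ) : ℝ) * (-1) ^ k / ((k : ℝ) + (x+1)) ^ 3 := by
        rw [← Finset.sum_neg_distrib]
        refine Finset.sum_congr rfl fun k _ => ?_
        have h : ((k:ℝ)+1) + x = (k:ℝ) + (x+1) := by ring
        rw [h, pow_succ]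
        ring
      have t2 : ∑ k ∈ range (n+1), ((n.choose (k+1) : ℕ) : ℝ) * (-1) ^ (k+1) / (((k:ℝ)+1) + x) ^ 3
          = (∑ k ∈ range (n + 1), ((n.choose k : ℕ) : ℝ) * (-1) ^ k / ((k : ℝ) + x) ^ 3) - 1 / x ^ 3 := by
        have h := e2
        rw [e3] at h
        linarith [h]
      rw [t1, t2]
      ring
    -- shift identities (big sums in terms of shifted / smaller ones)
    have hA : ∑ j ∈ range (n + 2), 1 / ((j : ℝ) + x)
        = (∑ j ∈ range (n + 1), 1 / ((j : ℝ) + (x+1))) + 1 / x := by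
      rw [Finset.sum_range_succ' (fun j => 1 / ((j : ℝ) + x)) (n+1)]
      congr 1
      · refine Finset.sum_congr rfl fun j _ => ?_
        push_cast
        ring_nf
      · norm_num
    have hB : ∑ j ∈ range (n + 2), 1 / ((j : ℝ) + x) ^ 2
        = (∑ j ∈ range (n + 1), 1 / ((j : ℝ) + (x+1)) ^ 2) + 1 / x ^ 2 := by
      rw [Finset.sum_range_succ' (fun j => 1 / ((j : ℝ) + x) ^ 2) (n+1)]
      congr 1
      · refine Finset.sum_congr rfl fun j _ => ?_
        push_cast
        ring_nf
      · norm_num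
    have hP : ∏ j ∈ range (n + 2), ((j : ℝ) + x)
        = (∏ j ∈ range (n + 1), ((j : ℝ) + (x+1))) * x := by
      rw [Finset.prod_range_succ' (fun j => ((j : ℝ) + x)) (n+1)]
      congr 1
      · refine Finset.prod_congr rfl fun j _ => ?_
        push_cast
        ring_nf
      · norm_num
    have hA2 : ∑ j ∈ range (n + 2), 1 / ((j : ℝ) + x)
        = (∑ j ∈ range (n + 1), 1 / ((j : ℝ) + x)) + 1 / ((n:ℝ) + 1 + x) := by
      rw [show n + 2 = (n+1)+1 from rfl, Finset.sum_range_succ]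
      push_cast
      ring
    have hB2 : ∑ j ∈ range (n + 2), 1 / ((j : ℝ) + x) ^ 2
        = (∑ j ∈ range (n + 1), 1 / ((j : ℝ) + x) ^ 2) + 1 / ((n:ℝ) + 1 + x) ^ 2 := by
      rw [show n + 2 = (n+1)+1 from rfl, Finset.sum_range_succ]
      push_cast
      ring
    have hP2 : ∏ j ∈ range (n + 2), ((j : ℝ) + x)
        = (∏ j ∈ range (n + 1), ((j : ℝ) + x)) * ((n:ℝ) + 1 + x) := by
      rw [show n + 2 = (n+1)+1 from rfl, Finset.prod_range_succ]
      push_cast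
      ring
    have hqpos : 0 < ∏ j ∈ range (n + 1), ((j : ℝ) + x) := by
      apply Finset.prod_pos; intro j _; positivity
    have hcpos : (0:ℝ) < (n:ℝ) + 1 + x := by positivity
    have hc : ((n:ℝ) + 1 + x) ≠ 0 := ne_of_gt hcpos
    have hqne : (∏ j ∈ range (n + 1), ((j : ℝ) + x)) ≠ 0 := ne_of_gt hqpos
    -- derived rewriting rules
    have hA' : ∑ j ∈ range (n + 1), 1 / ((j : ℝ) + (x+1))
        = (∑ j ∈ range (n + 2), 1 / ((j : ℝ) + x)) - 1 / x := by linarith [hA]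
    have hB' : ∑ j ∈ range (n + 1), 1 / ((j : ℝ) + (x+1)) ^ 2
        = (∑ j ∈ range (n + 2), 1 / ((j : ℝ) + x) ^ 2) - 1 / x ^ 2 := by linarith [hB]
    have hA2' : ∑ j ∈ range (n + 1), 1 / ((j : ℝ) + x)
        = (∑ j ∈ range (n + 2), 1 / ((j : ℝ) + x)) - 1 / ((n:ℝ) + 1 + x) := by linarith [hA2]
    have hB2' : ∑ j ∈ range (n + 1), 1 / ((j : ℝ) + x) ^ 2
        = (∑ j ∈ range (n + 2), 1 / ((j : ℝ) + x) ^ 2) - 1 / ((n:ℝ) + 1 + x) ^ 2 := by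
      linarith [hB2]
    have hq2 : ∏ j ∈ range (n + 1), ((j : ℝ) + (x+1))
        = (∏ j ∈ range (n + 1), ((j : ℝ) + x)) * ((n:ℝ) + 1 + x) / x := by
      rw [eq_div_iff hx0, ← hP2, hP]
    have hfact : (((n+1).factorial : ℕ) : ℝ) = ((n.factorial : ℕ) : ℝ) * ((n:ℝ) + 1) := by
      push_cast [Nat.factorial_succ]
      ring
    have IH1 := ih x hx
    have IH2 := ih (x+1) hx1
    rw [hrec, IH1, IH2, hA', hB', hA2', hB2', hq2, hP2, hfact]
    set q := ∏ j ∈ range (n + 1), ((j : ℝ) + x) with hqdef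
    set A := ∑ j ∈ range (n + 2), 1 / ((j : ℝ) + x) with hAdef
    set B := ∑ j ∈ range (n + 2), 1 / ((j : ℝ) + x) ^ 2 with hBdef
    field_simp
    ring

theorem coppo_formula_two (n : ℕ) (x : ℝ) (hx : 0 < x) :
    ∑ k ∈ Finset.range (n + 1), (n.choose k : ℝ) * (-1) ^ k / ((k : ℝ) + x) ^ 3 =
      (n.factorial : ℝ) * Real.Gamma x / Real.Gamma ((n : ℝ) + 1 + x) * (1 / 2) *
        ((∑ j ∈ Finset.range (n + 1), 1 / ((j : ℝ) + x)) ^ 2 +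
          ∑ j ∈ Finset.range (n + 1), 1 / ((j : ℝ) + x) ^ 2) := by
  have h1 : (n : ℝ) + 1 + x = (((n + 1 : ℕ)) : ℝ) + x := by push_cast; ring
  have h2 := gamma_prod (n + 1) x hx
  have hG : Real.Gamma x ≠ 0 := ne_of_gt (Real.Gamma_pos_of_pos hx)
  have hppos : 0 < ∏ j ∈ range (n + 1), ((j : ℝ) + x) := by
    apply Finset.prod_pos; intro j _; positivity
  have hgamma : (n.factorial : ℝ) * Real.Gamma x / Real.Gamma ((n : ℝ) + 1 + x)
      = (n.factorial : ℝ) / (∏ j ∈ range (n + 1), ((j : ℝ) + x)) := by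
    rw [h1, h2]
    field_simp
  rw [hgamma]
  exact coppo_aux n x hx
end

section
/- For all positive integers n, s(n,4) = (-1)^n ((n-1)!/6) ((H_{n-1})^3 - 3 H_{n-1} H_{n-1}^{(2)} + 2 H_{n-1}^{(3)}). -/
open Polynomial


/-- The signed Stirling numbers of the first kind, defined as the coefficients of the
falling factorial `x(x-1)⋯(x-n+1) = ∑_{k=0}^n s(n,k) x^k`. -/
noncomputable def stirlingFirst (n k : ℕ) : ℤ := (descPochhammer ℤ n).coeff k

/-- The generalized harmonic number `H_n^{(m)} = ∑_{k=1}^n 1/k^m` as a real number. -/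
noncomputable def genHarmonic (m n : ℕ) : ℝ := ∑ k ∈ Finset.range n, (1 : ℝ) / ((k + 1 : ℝ)) ^ m

lemma stirlingFirst_cast (n k : ℕ) :
    (stirlingFirst n k : ℝ) = (descPochhammer ℝ n).coeff k := by
  rw [stirlingFirst, ← descPochhammer_map (Int.castRingHom ℝ), Polynomial.coeff_map]
  rfl

lemma coeff_rec (n k : ℕ) :
    (descPochhammer ℝ (n+1)).coeff (k+1)
      = (descPochhammer ℝ n).coeff k - n * (descPochhammer ℝ n).coeff (k+1) := by
  rw [descPochhammer_succ_right, mul_sub, Polynomial.coeff_sub, Polynomial.coeff_mul_X]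
  have : (n : ℝ[X]) = Polynomial.C (n : ℝ) := by simp
  rw [this, mul_comm, Polynomial.coeff_C_mul]

lemma genHarmonic_succ (m n : ℕ) :
    genHarmonic m (n+1) = genHarmonic m n + 1 / ((n+1 : ℝ))^m := by
  rw [genHarmonic, genHarmonic, Finset.sum_range_succ]

lemma coeff_zero (n : ℕ) : (descPochhammer ℝ (n+1)).coeff 0 = 0 := by
  rw [Polynomial.coeff_zero_eq_eval_zero, descPochhammer_ne_zero_eval_zero]
  exact n.succ_ne_zero

lemma main_ind (n : ℕ) :
    (descPochhammer ℝ (n+1)).coeff 1 = (-1)^n * n.factorial ∧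
    (descPochhammer ℝ (n+1)).coeff 2 = (-1)^(n+1) * n.factorial * genHarmonic 1 n ∧
    (descPochhammer ℝ (n+1)).coeff 3 = (-1)^n * (n.factorial / 2) *
      ((genHarmonic 1 n)^2 - genHarmonic 2 n) ∧
    (descPochhammer ℝ (n+1)).coeff 4 = (-1)^(n+1) * (n.factorial / 6) *
      ((genHarmonic 1 n)^3 - 3 * genHarmonic 1 n * genHarmonic 2 n + 2 * genHarmonic 3 n) := by
  induction n with
  | zero =>
    simp [descPochhammer_one, genHarmonic, Polynomial.coeff_X]
  | succ n ih =>
    obtain ⟨h1, h2, h3, h4⟩ := ih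
    have hne : ((n:ℝ)+1) ≠ 0 := by positivity
    have e1 := genHarmonic_succ 1 n
    have e2 := genHarmonic_succ 2 n
    have e3 := genHarmonic_succ 3 n
    have c0 := _root_.coeff_zero n
    have r1 := coeff_rec (n+1) 0
    have r2 := coeff_rec (n+1) 1
    have r3 := coeff_rec (n+1) 2
    have r4 := coeff_rec (n+1) 3
    norm_num at r1 r2 r3 r4
    rw [c0, h1] at r1
    rw [h1, h2] at r2
    rw [h2, h3] at r3
    rw [h3, h4] at r4
    refine ⟨?_, ?_, ?_, ?_⟩
    · rw [r1]
      push_cast [Nat.factorial_succ]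
      ring
    · rw [r2, e1]
      push_cast [Nat.factorial_succ]
      field_simp
      ring
    · rw [r3, e1, e2]
      push_cast [Nat.factorial_succ]
      field_simp
      ring
    · rw [r4, e1, e2, e3]
      push_cast [Nat.factorial_succ]
      field_simp
      ring

theorem stirlingFirst_four (n : ℕ) (hn : 0 < n) :
    (stirlingFirst n 4 : ℝ) = (-1) ^ n * (((n - 1).factorial : ℝ) / 6) * ((genHarmonic 1 (n - 1)) ^ 3 - 3 * genHarmonic 1 (n - 1) * genHarmonic 2 (n - 1) + 2 * genHarmonic 3 (n - 1)) := by
  obtain ⟨m, rfl⟩ := Nat.exists_eq_add_of_lt hn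
  simp only [Nat.add_sub_cancel, zero_add]
  rw [stirlingFirst_cast, (main_ind m).2.2.2]
end
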